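/- Define erf(t) = (2/√π)·∫₀ᵗ e^{−x²} dx, let c = √(π/2)·e^{1/2} (so that c·√(2/π)·e^{−1/2} = 1) and k = 1 − c·erf(1/√2). Then the functions u(t) = √(2/π)·c·e^{−(t+1)²/2} + c·t·erf((t+1)/√2) + k·t and v(t) = c·erf((t+1)/√2) + k are differentiable on ℝ and satisfy u'(t) = −u(t) + (t+1)·v(t) and v'(t) = u(t) − t·v(t) for all t ∈ ℝ, together with the initial conditions u(0) = 1 and v(0) = 1. -/

import Mathlib

noncomputable def erf (t : ℝ) : ℝ :=
  (2 / Real.sqrt Real.pi) * ∫ x in (0 : ℝ)..t, Real.exp (-x ^ 2)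

lemma erf_hasDerivAt (t : ℝ) :
    HasDerivAt erf (2 / Real.sqrt Real.pi * Real.exp (-t ^ 2)) t := by
  have hcont : Continuous fun x : ℝ => Real.exp (-x ^ 2) := by continuity
  have h : HasDerivAt (fun s => ∫ x in (0:ℝ)..s, Real.exp (-x ^ 2))
      (Real.exp (-t ^ 2)) t :=
    intervalIntegral.integral_hasDerivAt_right (hcont.intervalIntegrable _ _)
      (hcont.stronglyMeasurableAtFilter _ _) hcont.continuousAt
  exact h.const_mul (2 / Real.sqrt Real.pi)

lemma sqrt2_sq : Real.sqrt 2 * Real.sqrt 2 = 2 := Real.mul_self_sqrt (by norm_num)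
lemma sqrt2_ne : Real.sqrt 2 ≠ 0 := by positivity
lemma sqrtpi_ne : Real.sqrt Real.pi ≠ 0 := by positivity

lemma hsq (s : ℝ) : -((s + 1) / Real.sqrt 2) ^ 2 = -(s + 1) ^ 2 / 2 := by
  rw [div_pow, Real.sq_sqrt (by norm_num : (0:ℝ) ≤ 2)]
  ring

lemma erf_comp_hasDerivAt (t : ℝ) :
    HasDerivAt (fun s => erf ((s + 1) / Real.sqrt 2))
      (2 / Real.sqrt Real.pi * Real.exp (-(t + 1) ^ 2 / 2) * (1 / Real.sqrt 2)) t := by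
  have hinner : HasDerivAt (fun s : ℝ => (s + 1) / Real.sqrt 2) (1 / Real.sqrt 2) t := by
    simpa using ((hasDerivAt_id t).add_const 1).div_const (Real.sqrt 2)
  have := (erf_hasDerivAt ((t + 1) / Real.sqrt 2)).comp t hinner
  simpa [hsq, Function.comp_def] using this

lemma exp_comp_hasDerivAt (t : ℝ) :
    HasDerivAt (fun s => Real.exp (-(s + 1) ^ 2 / 2))
      (Real.exp (-(t + 1) ^ 2 / 2) * (-(t + 1))) t := by
  have hinner : HasDerivAt (fun s : ℝ => -(s + 1) ^ 2 / 2) (-(t + 1)) t := by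
    have := ((((hasDerivAt_id t).add_const 1).pow 2).neg).div_const 2
    refine this.congr_deriv ?_
    simp
    ring
  exact hinner.exp

theorem linear_system_exact_solution
    (c k : ℝ)
    (hc : c = Real.sqrt (Real.pi / 2) * Real.exp (1 / 2))
    (hk : k = 1 - c * erf (1 / Real.sqrt 2))
    (u v : ℝ → ℝ)
    (hu : ∀ t, u t = Real.sqrt (2 / Real.pi) * c * Real.exp (-(t + 1) ^ 2 / 2)
        + c * t * erf ((t + 1) / Real.sqrt 2) + k * t)
    (hv : ∀ t, v t = c * erf ((t + 1) / Real.sqrt 2) + k) :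
    Differentiable ℝ u ∧ Differentiable ℝ v ∧
    (∀ t, deriv u t = -u t + (t + 1) * v t) ∧
    (∀ t, deriv v t = u t - t * v t) ∧
    u 0 = 1 ∧ v 0 = 1 := by
  have h2π : Real.sqrt (2 / Real.pi) = Real.sqrt 2 / Real.sqrt Real.pi := by
    rw [Real.sqrt_div (by norm_num : (0:ℝ) ≤ 2)]
  have hπ2 : Real.sqrt (Real.pi / 2) = Real.sqrt Real.pi / Real.sqrt 2 := by
    rw [Real.sqrt_div Real.pi_pos.le]
  have hv' : ∀ t, HasDerivAt v
      (c * (2 / Real.sqrt Real.pi * Real.exp (-(t + 1) ^ 2 / 2) * (1 / Real.sqrt 2))) t := by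
    intro t
    have := ((erf_comp_hasDerivAt t).const_mul c).add_const k
    exact this.congr_of_eventuallyEq (by filter_upwards with s; rw [hv s])
  have hu' : ∀ t, HasDerivAt u
      (Real.sqrt (2 / Real.pi) * c * (Real.exp (-(t + 1) ^ 2 / 2) * (-(t + 1)))
        + (c * erf ((t + 1) / Real.sqrt 2)
          + c * t * (2 / Real.sqrt Real.pi * Real.exp (-(t + 1) ^ 2 / 2) * (1 / Real.sqrt 2)))
        + k) t := by
    intro t
    have h1 := (exp_comp_hasDerivAt t).const_mul (Real.sqrt (2 / Real.pi) * c)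
    have h2 : HasDerivAt (fun s : ℝ => c * s) c t := by
      simpa using (hasDerivAt_id t).const_mul c
    have h3 := h2.mul (erf_comp_hasDerivAt t)
    have h4 : HasDerivAt (fun s : ℝ => k * s) k t := by
      simpa using (hasDerivAt_id t).const_mul k
    have := (h1.add h3).add h4
    refine (this.congr_of_eventuallyEq (by filter_upwards with s; rw [hu s]; rfl)).congr_deriv ?_
    ring
  refine ⟨fun t => (hu' t).differentiableAt, fun t => (hv' t).differentiableAt, ?_, ?_, ?_, ?_⟩
  · intro t
    have key : 2 / Real.sqrt Real.pi * Real.exp (-(t + 1) ^ 2 / 2) * (1 / Real.sqrt 2)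
        = Real.sqrt 2 / Real.sqrt Real.pi * Real.exp (-(t + 1) ^ 2 / 2) := by
      field_simp
      linear_combination -sqrt2_sq
    rw [(hu' t).deriv, hu t, hv t, h2π, key]
    ring
  · intro t
    have key : 2 / Real.sqrt Real.pi * Real.exp (-(t + 1) ^ 2 / 2) * (1 / Real.sqrt 2)
        = Real.sqrt 2 / Real.sqrt Real.pi * Real.exp (-(t + 1) ^ 2 / 2) := by
      field_simp
      linear_combination -sqrt2_sq
    rw [(hv' t).deriv, hu t, hv t, h2π, key]
    ring
  · rw [hu 0, hc, hπ2, h2π]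
    field_simp
    have he : Real.exp (1 / 2) * Real.exp (-1 / 2) = 1 := by
      rw [← Real.exp_add]; norm_num
    norm_num at he ⊢
    linear_combination Real.sqrt 2 * he
  · rw [hv 0, hk]
    norm_num
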